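/- Fix S₀ > 0, define erfc(x) = (2/√π)·∫_x^∞ e^{−τ²} dτ, set A = (1/2)·S₀³·e^{S₀²/4} and T∞ = −A·[(1/S₀)·e^{−S₀²/4} − (√π/2)·erfc(S₀/2)], and define u(r,t) = A·[(1/s)·e^{−s²/4} − (√π/2)·erfc(s/2)] + T∞ with s = r/√t, and R(t) = S₀·√t. Then for all t > 0: (i) the isothermal condition u(R(t), t) = 0 holds, and (ii) the Stefan condition dR/dt(t) + ∂u/∂r(R(t), t) = 0 holds. -/

import Mathlib

open MeasureTheory

lemma hasDerivAt_tailGauss (x : ℝ) :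
    HasDerivAt (fun y => ∫ τ in Set.Ioi y, Real.exp (-τ ^ 2)) (-Real.exp (-x ^ 2)) x := by
  have hint : Integrable (fun τ : ℝ => Real.exp (-τ ^ 2)) := by
    simpa [neg_mul, one_mul] using integrable_exp_neg_mul_sq (one_pos)
  have key : ∀ y : ℝ, (∫ τ in Set.Ioi y, Real.exp (-τ ^ 2)) =
      (∫ τ in Set.Ioi (0:ℝ), Real.exp (-τ ^ 2)) - ∫ τ in (0:ℝ)..y, Real.exp (-τ ^ 2) := by
    intro y
    have h1 := intervalIntegral.integral_Iic_add_Ioi (μ := volume) (b := y)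
      hint.integrableOn hint.integrableOn
    have h2 := intervalIntegral.integral_Iic_add_Ioi (μ := volume) (b := (0:ℝ))
      hint.integrableOn hint.integrableOn
    have h3 := intervalIntegral.integral_Iic_sub_Iic (μ := volume) (a := (0:ℝ)) (b := y)
      hint.integrableOn hint.integrableOn
    linarith
  have H : HasDerivAt (fun y => ∫ τ in (0:ℝ)..y, Real.exp (-τ ^ 2)) (Real.exp (-x ^ 2)) x :=
    intervalIntegral.integral_hasDerivAt_right hint.intervalIntegrable
      (Continuous.stronglyMeasurableAtFilter (by continuity) _ _) (by fun_prop)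
  have := (hasDerivAt_const x (∫ τ in Set.Ioi (0:ℝ), Real.exp (-τ ^ 2))).sub H
  rw [funext key]
  rw [zero_sub] at this
  exact this

theorem frank_sphere_3d_interface_conditions
    (S₀ : ℝ) (hS₀ : 0 < S₀)
    (erfc : ℝ → ℝ)
    (herfc : erfc = fun x => (2 / Real.sqrt Real.pi) * ∫ τ in Set.Ioi x, Real.exp (-τ ^ 2))
    (A Tinf : ℝ)
    (hA : A = (1 / 2) * S₀ ^ 3 * Real.exp (S₀ ^ 2 / 4))
    (hT : Tinf = -A * ((1 / S₀) * Real.exp (-S₀ ^ 2 / 4) -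
      (Real.sqrt Real.pi / 2) * erfc (S₀ / 2)))
    (u : ℝ → ℝ → ℝ)
    (hu : u = fun r t =>
      A * ((1 / (r / Real.sqrt t)) * Real.exp (-(r / Real.sqrt t) ^ 2 / 4) -
        (Real.sqrt Real.pi / 2) * erfc ((r / Real.sqrt t) / 2)) + Tinf)
    (R : ℝ → ℝ) (hR : R = fun t => S₀ * Real.sqrt t) :
    ∀ t : ℝ, 0 < t →
      u (R t) t = 0 ∧
      deriv R t + deriv (fun r => u r t) (R t) = 0 := by
  intro t ht
  set c := Real.sqrt t with hcdef
  have hc : 0 < c := Real.sqrt_pos.mpr ht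
  have hs : S₀ * c / c = S₀ := by field_simp
  have herfc' : ∀ x : ℝ, HasDerivAt erfc (2 / Real.sqrt Real.pi * -Real.exp (-x ^ 2)) x := by
    intro x
    rw [herfc]
    exact (hasDerivAt_tailGauss x).const_mul _
  constructor
  · rw [hu, hR, hT]
    simp only [← hcdef, hs]
    ring
  · -- derivative of R
    have hRd : HasDerivAt R (S₀ * (1 / (2 * c))) t := by
      rw [hR]
      exact (Real.hasDerivAt_sqrt ht.ne').const_mul S₀
    set r₀ := S₀ * c with hr₀
    have hr₀c : r₀ / c = S₀ := hs
    have hlin : HasDerivAt (fun r : ℝ => r / c) (1 / c) r₀ := by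
      simpa using (hasDerivAt_id r₀).div_const c
    have hinv : HasDerivAt (fun r : ℝ => 1 / (r / c)) (-(1 / c) / S₀ ^ 2) r₀ := by
      simp only [one_div]
      have h := hlin.inv (by rw [hr₀c]; exact hS₀.ne')
      rw [hr₀c, one_div] at h
      exact h
    have hsq : HasDerivAt (fun r : ℝ => -(r / c) ^ 2 / 4) (-(2 * S₀ * (1 / c)) / 4) r₀ := by
      simpa [hr₀c] using ((hlin.pow 2).neg).div_const 4
    have hexp : HasDerivAt (fun r : ℝ => Real.exp (-(r / c) ^ 2 / 4))
        (Real.exp (-S₀ ^ 2 / 4) * (-(2 * S₀ * (1 / c)) / 4)) r₀ := by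
      simpa [hr₀c] using hsq.exp
    have harg : HasDerivAt (fun r : ℝ => r / c / 2) (1 / c / 2) r₀ := hlin.div_const 2
    have hcerfc : HasDerivAt (fun r : ℝ => erfc (r / c / 2))
        (2 / Real.sqrt Real.pi * -Real.exp (-(S₀ / 2) ^ 2) * (1 / c / 2)) r₀ := by
      have := (herfc' (r₀ / c / 2)).comp r₀ harg
      rw [hr₀c] at this
      exact this
    have hud : HasDerivAt (fun r => u r t)
        (A * ((-(1 / c) / S₀ ^ 2) * Real.exp (-S₀ ^ 2 / 4)
          + (1 / (S₀)) * (Real.exp (-S₀ ^ 2 / 4) * (-(2 * S₀ * (1 / c)) / 4))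
          - Real.sqrt Real.pi / 2 * (2 / Real.sqrt Real.pi * -Real.exp (-(S₀ / 2) ^ 2) * (1 / c / 2)))) r₀ := by
      rw [hu]
      have h1 : HasDerivAt (fun r : ℝ => (1 / (r / c)) * Real.exp (-(r / c) ^ 2 / 4))
          ((-(1 / c) / S₀ ^ 2) * Real.exp (-S₀ ^ 2 / 4)
            + (1 / S₀) * (Real.exp (-S₀ ^ 2 / 4) * (-(2 * S₀ * (1 / c)) / 4))) r₀ := by
        have := hinv.mul hexp
        rw [hr₀c] at this
        exact this
      exact ((h1.sub (hcerfc.const_mul (Real.sqrt Real.pi / 2))).const_mul A).add_const Tinf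
    rw [hRd.deriv, hR] at *
    show S₀ * (1 / (2 * c)) + deriv (fun r => u r t) r₀ = 0
    rw [hud.deriv]
    have hpi : Real.sqrt Real.pi ≠ 0 := (Real.sqrt_pos.mpr Real.pi_pos).ne'
    have hEE : Real.exp (-(S₀ / 2) ^ 2) = Real.exp (-S₀ ^ 2 / 4) := by ring_nf
    have hE1 : Real.exp (S₀ ^ 2 / 4) * Real.exp (-S₀ ^ 2 / 4) = 1 := by
      rw [← Real.exp_add, show S₀ ^ 2 / 4 + -S₀ ^ 2 / 4 = 0 by ring, Real.exp_zero]
    have hE2 : Real.exp (S₀ ^ 2 / 4) * Real.exp (-(S₀ ^ 2 / 4)) = 1 := by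
      rw [← Real.exp_add, show S₀ ^ 2 / 4 + -(S₀ ^ 2 / 4) = 0 by ring, Real.exp_zero]
    rw [hEE, hA]
    field_simp
    linear_combination (-(8 * S₀)) * hE2
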